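/- Let M : ℝ → Matrix (Fin n) (Fin n) ℝ be a differentiable matrix-valued function satisfying M'(t) = κ(t) − M(t)², where κ(t) is symmetric positive semidefinite for all t and M(0) is symmetric positive definite, and suppose M(t) remains symmetric for all t. Then det(M(t)) > 0 for all t ≥ 0. -/

import Mathlib

open Matrix Finset

private lemma quad_eq {n : ℕ} (A : Matrix (Fin n) (Fin n) ℝ) (v : Fin n → ℝ) :
    v ⬝ᵥ (A *ᵥ v) = ∑ i, ∑ j, v i * (A i j * v j) := by
  simp [dotProduct, Matrix.mulVec, Finset.mul_sum]

open scoped MatrixOrder in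
private lemma psd_quad_sq_bound {n : ℕ} {A : Matrix (Fin n) (Fin n) ℝ} (hA : A.PosSemidef)
    (v : Fin n → ℝ) :
    v ⬝ᵥ ((A * A) *ᵥ v) ≤ (∑ i, ∑ j, |A i j|) * (v ⬝ᵥ (A *ᵥ v)) := by
  set S := CFC.sqrt A with hSdef
  have hSpsd : S.PosSemidef := (CFC.sqrt_nonneg A).posSemidef
  have hSS : S * S = A := CFC.sqrt_mul_sqrt_self A hA.nonneg
  have hSsymm : Sᵀ = S := by
    have := hSpsd.isHermitian
    rwa [Matrix.IsHermitian, Matrix.conjTranspose_eq_transpose_of_trivial] at this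
  have key : ∀ x y : Fin n → ℝ, x ⬝ᵥ (S *ᵥ y) = (S *ᵥ x) ⬝ᵥ y := by
    intro x y
    rw [Matrix.dotProduct_mulVec, ← Matrix.mulVec_transpose, hSsymm]
  set w := S *ᵥ v with hw
  have h1 : v ⬝ᵥ ((A * A) *ᵥ v) = w ⬝ᵥ (A *ᵥ w) := by
    have : A * A = S * (A * S) := by
      rw [← hSS]; noncomm_ring
    rw [this, ← Matrix.mulVec_mulVec, key, hw, Matrix.mulVec_mulVec]
  have h2 : v ⬝ᵥ (A *ᵥ v) = w ⬝ᵥ w := by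
    rw [← hSS, ← Matrix.mulVec_mulVec, key]
  rw [h1, h2, quad_eq]
  have hterm : ∀ i j : Fin n, w i * (A i j * w j) ≤ |A i j| * (w ⬝ᵥ w) := by
    intro i j
    have hww : |w i| * |w j| ≤ w ⬝ᵥ w := by
      have h1 : w i ^ 2 ≤ w ⬝ᵥ w := by
        have := Finset.single_le_sum (f := fun k => w k * w k)
          (fun k _ => mul_self_nonneg (w k)) (Finset.mem_univ i)
        simpa [dotProduct, pow_two] using this
      have h2 : w j ^ 2 ≤ w ⬝ᵥ w := by
        have := Finset.single_le_sum (f := fun k => w k * w k)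
          (fun k _ => mul_self_nonneg (w k)) (Finset.mem_univ j)
        simpa [dotProduct, pow_two] using this
      nlinarith [abs_nonneg (w i), abs_nonneg (w j), sq_abs (w i), sq_abs (w j),
        sq_nonneg (|w i| - |w j|)]
    calc w i * (A i j * w j) ≤ |w i * (A i j * w j)| := le_abs_self _
      _ = |A i j| * (|w i| * |w j|) := by rw [abs_mul, abs_mul]; ring
      _ ≤ |A i j| * (w ⬝ᵥ w) := by
          exact mul_le_mul_of_nonneg_left hww (abs_nonneg _)
  calc ∑ i, ∑ j, w i * (A i j * w j) ≤ ∑ i, ∑ j, |A i j| * (w ⬝ᵥ w) := by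
        apply Finset.sum_le_sum; intro i _
        exact Finset.sum_le_sum fun j _ => hterm i j
    _ = (∑ i, ∑ j, |A i j|) * (w ⬝ᵥ w) := by
        rw [Finset.sum_mul]; congr 1; ext i; rw [Finset.sum_mul]

theorem riccati_det_pos (n : ℕ) (M κ : ℝ → Matrix (Fin n) (Fin n) ℝ)
    (hderiv : ∀ t, ∀ i j, HasDerivAt (fun s => M s i j) ((κ t - M t * M t) i j) t)
    (hκ : ∀ t, (κ t).PosSemidef) (hM0 : (M 0).PosDef)
    (hsymm : ∀ t, (M t).IsSymm) :
    ∀ t ≥ (0 : ℝ), 0 < (M t).det := by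
  have hstar : ∀ x : Fin n → ℝ, star x = x := fun x => funext fun i => rfl
  have hherm : ∀ t, (M t).IsHermitian := by
    intro t
    rw [Matrix.IsHermitian, Matrix.conjTranspose_eq_transpose_of_trivial]
    exact hsymm t
  -- continuity of entries
  have hMc : ∀ i j, Continuous fun t => M t i j := by
    intro i j
    exact continuous_iff_continuousAt.2 fun t => (hderiv t i j).continuousAt
  -- the quadratic form, jointly continuous
  set Q : ℝ × (Fin n → ℝ) → ℝ := fun p => p.2 ⬝ᵥ (M p.1 *ᵥ p.2) with hQdef
  have hQc : Continuous Q := by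
    have : Q = fun p : ℝ × (Fin n → ℝ) => ∑ i, ∑ j, p.2 i * (M p.1 i j * p.2 j) := by
      funext p; exact quad_eq _ _
    rw [this]
    refine continuous_finset_sum _ fun i _ => continuous_finset_sum _ fun j _ => ?_
    exact ((continuous_apply i).comp continuous_snd).mul
      (((hMc i j).comp continuous_fst).mul ((continuous_apply j).comp continuous_snd))
  intro t₀ ht₀
  by_contra hdet
  have hnotPD : ¬ (M t₀).PosDef := fun h => hdet h.det_pos
  -- extract a unit vector with nonpositive quadratic form at t₀
  have hbad : ∃ x : Fin n → ℝ, ‖x‖ = 1 ∧ Q (t₀, x) ≤ 0 := by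
    rw [Matrix.posDef_iff_dotProduct_mulVec, not_and] at hnotPD
    push_neg at hnotPD
    obtain ⟨x, hx0, hxq⟩ := hnotPD (hherm t₀)
    refine ⟨‖x‖⁻¹ • x, ?_, ?_⟩
    · rw [norm_smul, norm_inv, norm_norm, inv_mul_cancel₀ (norm_ne_zero_iff.2 hx0)]
    · have heq : Q (t₀, ‖x‖⁻¹ • x) = ‖x‖⁻¹ * (‖x‖⁻¹ * Q (t₀, x)) := by
        simp only [hQdef, Matrix.mulVec_smul, smul_dotProduct, dotProduct_smul,
          smul_eq_mul]
      rw [heq]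
      have h1 : (0:ℝ) ≤ ‖x‖⁻¹ := inv_nonneg.2 (norm_nonneg x)
      have h2 : Q (t₀, x) ≤ 0 := by simpa using hxq
      exact mul_nonpos_of_nonneg_of_nonpos h1 (mul_nonpos_of_nonneg_of_nonpos h1 h2)
  -- the set of bad times in [0, t₀], via a compact projection
  set K : Set (ℝ × (Fin n → ℝ)) :=
    (Set.Icc 0 t₀ ×ˢ Metric.sphere (0 : Fin n → ℝ) 1) ∩ {p | Q p ≤ 0} with hKdef
  have hKcomp : IsCompact K :=
    ((isCompact_Icc.prod (isCompact_sphere 0 1)).inter_right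
      (isClosed_le hQc continuous_const))
  set S : Set ℝ := Prod.fst '' K with hSdef
  have hScomp : IsCompact S := hKcomp.image continuous_fst
  have hSne : S.Nonempty := by
    obtain ⟨x, hx1, hxq⟩ := hbad
    exact ⟨t₀, ⟨(t₀, x), ⟨⟨⟨ht₀, le_refl t₀⟩, by simpa [mem_sphere_iff_norm] using hx1⟩, hxq⟩, rfl⟩⟩
  set s := sInf S with hs
  have hsS : s ∈ S := hScomp.sInf_mem hSne
  obtain ⟨⟨s', v⟩, ⟨⟨hsIcc, hvsph⟩, hsvq⟩, hfst⟩ := hsS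
  have hs' : s' = s := hfst
  subst hs'
  have hv1 : ‖v‖ = 1 := by simpa [mem_sphere_iff_norm] using hvsph
  have hv0 : v ≠ 0 := by intro h; rw [h, norm_zero] at hv1; exact one_ne_zero hv1.symm
  have hsle : (0:ℝ) ≤ s := hsIcc.1
  have hst0 : s ≤ t₀ := hsIcc.2
  have hs0 : 0 < s := by
    rcases lt_or_eq_of_le hsle with h | h
    · exact h
    · exfalso
      have hpos := hM0.dotProduct_mulVec_pos hv0
      rw [hstar] at hpos
      have hq0 : Q (s, v) ≤ 0 := hsvq
      rw [← h] at hq0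
      exact absurd hq0 (not_le.2 hpos)
  -- M is positive definite strictly before s
  have hPD : ∀ τ, 0 ≤ τ → τ < s → (M τ).PosDef := by
    intro τ hτ0 hτs
    have hτS : τ ∉ S := fun h => absurd (csInf_le hScomp.bddBelow h) (not_le.2 hτs)
    refine Matrix.PosDef.of_dotProduct_mulVec_pos (hherm τ) fun x hx => ?_
    rw [hstar]
    by_contra hle
    push_neg at hle
    apply hτS
    refine ⟨(τ, ‖x‖⁻¹ • x), ⟨⟨⟨hτ0, le_trans (le_of_lt hτs) hst0⟩, ?_⟩, ?_⟩, rfl⟩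
    · rw [mem_sphere_iff_norm, sub_zero, norm_smul, norm_inv, norm_norm,
        inv_mul_cancel₀ (norm_ne_zero_iff.2 hx)]
    · show Q (τ, ‖x‖⁻¹ • x) ≤ 0
      have heq : Q (τ, ‖x‖⁻¹ • x) = ‖x‖⁻¹ * (‖x‖⁻¹ * Q (τ, x)) := by
        simp only [hQdef, Matrix.mulVec_smul, smul_dotProduct, dotProduct_smul,
          smul_eq_mul]
      rw [heq]
      have h1 : (0:ℝ) ≤ ‖x‖⁻¹ := inv_nonneg.2 (norm_nonneg x)
      have h2 : Q (τ, x) ≤ 0 := hle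
      exact mul_nonpos_of_nonneg_of_nonpos h1 (mul_nonpos_of_nonneg_of_nonpos h1 h2)
  -- the scalar function g
  set g : ℝ → ℝ := fun τ => v ⬝ᵥ (M τ *ᵥ v) with hgdef
  have hg : ∀ τ, HasDerivAt g (v ⬝ᵥ ((κ τ - M τ * M τ) *ᵥ v)) τ := by
    intro τ
    have hgsum : g = fun σ => ∑ i, ∑ j, v i * (M σ i j * v j) := by
      funext σ; exact quad_eq _ _
    rw [hgsum, quad_eq]
    apply HasDerivAt.fun_sum
    intro i _
    apply HasDerivAt.fun_sum
    intro j _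
    exact (((hderiv τ i j).mul_const (v j)).const_mul (v i))
  have hgc : Continuous g := hQc.comp (continuous_id.prodMk continuous_const)
  -- bound the entries on [0, s]
  have hcc : Continuous fun τ => ∑ i, ∑ j, |M τ i j| := by
    refine continuous_finset_sum _ fun i _ => continuous_finset_sum _ fun j _ => (hMc i j).abs
  obtain ⟨C, hC⟩ := (isCompact_Icc (a := (0:ℝ)) (b := s)).exists_bound_of_continuousOn
    hcc.continuousOn
  have hCb : ∀ τ ∈ Set.Icc (0:ℝ) s, (∑ i, ∑ j, |M τ i j|) ≤ C := by
    intro τ hτ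
    exact (abs_le.1 (by simpa [Real.norm_eq_abs] using hC τ hτ)).2
  -- the auxiliary function h = exp(C τ) * g τ is monotone on [0, s]
  set h : ℝ → ℝ := fun τ => Real.exp (C * τ) * g τ with hhdef
  have hh : ∀ τ, HasDerivAt h
      (C * Real.exp (C * τ) * g τ +
        Real.exp (C * τ) * (v ⬝ᵥ ((κ τ - M τ * M τ) *ᵥ v))) τ := by
    intro τ
    have he : HasDerivAt (fun σ => Real.exp (C * σ)) (C * Real.exp (C * τ)) τ := by
      have := ((hasDerivAt_id τ).const_mul C).exp
      simpa [mul_comm] using this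
    exact he.mul (hg τ)
  have hmono : MonotoneOn h (Set.Icc 0 s) := by
    apply monotoneOn_of_deriv_nonneg (convex_Icc 0 s)
    · exact (Continuous.mul (by continuity) hgc).continuousOn
    · intro x _
      exact ((hh x).differentiableAt).differentiableWithinAt
    · intro x hx
      rw [interior_Icc] at hx
      rw [(hh x).deriv]
      have hxIcc : x ∈ Set.Icc (0:ℝ) s := ⟨le_of_lt hx.1, le_of_lt hx.2⟩
      have hPDx : (M x).PosDef := hPD x (le_of_lt hx.1) hx.2
      have hgx : 0 ≤ g x := by
        have := hPDx.dotProduct_mulVec_pos hv0; rw [hstar] at this; exact le_of_lt this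
      have hκx : 0 ≤ v ⬝ᵥ (κ x *ᵥ v) := by
        have := (hκ x).dotProduct_mulVec_nonneg v; rwa [hstar] at this
      have hM2 : v ⬝ᵥ ((M x * M x) *ᵥ v) ≤ (∑ i, ∑ j, |M x i j|) * g x :=
        psd_quad_sq_bound hPDx.posSemidef v
      have hCx : (∑ i, ∑ j, |M x i j|) ≤ C := hCb x hxIcc
      have hsplit : v ⬝ᵥ ((κ x - M x * M x) *ᵥ v)
          = v ⬝ᵥ (κ x *ᵥ v) - v ⬝ᵥ ((M x * M x) *ᵥ v) := by
        rw [Matrix.sub_mulVec, dotProduct_sub]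
      rw [hsplit]
      have hexp : 0 < Real.exp (C * x) := Real.exp_pos _
      nlinarith [mul_le_mul_of_nonneg_right hCx hgx]
  -- conclude
  have h0s : h 0 ≤ h s := hmono (Set.left_mem_Icc.2 (le_of_lt hs0))
    (Set.right_mem_Icc.2 (le_of_lt hs0)) (le_of_lt hs0)
  have hh0 : 0 < h 0 := by
    have := hM0.dotProduct_mulVec_pos hv0
    rw [hstar] at this
    simp only [hhdef, mul_zero, Real.exp_zero, one_mul]
    exact this
  have hhs : h s ≤ 0 := by
    have : g s ≤ 0 := hsvq
    have hexp : 0 < Real.exp (C * s) := Real.exp_pos _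
    exact mul_nonpos_of_nonneg_of_nonpos (le_of_lt hexp) this
  linarith
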